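/- The number of Lukasiewicz paths with n steps equals the n-th Catalan number C_n = (2n)!/(n!(n+1)!). -/

import Mathlib

/-- A Lukasiewicz path with `n` steps: a sequence `j_0, ..., j_n` of integers with
`j_0 = 0`, `j_n = 0`, `j_m ≥ 0` for all `m`, and each step `j_m - j_{m-1} ≥ -1`. -/
def IsLukPath (n : ℕ) (j : Fin (n + 1) → ℤ) : Prop :=
  j 0 = 0 ∧ j (Fin.last n) = 0 ∧ (∀ m, 0 ≤ j m) ∧
    ∀ m : Fin n, -1 ≤ j m.succ - j m.castSucc

section aux

open List DyckStep

/-- Encode a list of block sizes as a list of Dyck steps. -/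
def lukEnc : List ℕ → List DyckStep
  | [] => []
  | a :: l => replicate a U ++ D :: lukEnc l

@[simp] lemma lukEnc_nil : lukEnc [] = [] := rfl
@[simp] lemma lukEnc_cons (a : ℕ) (l : List ℕ) :
    lukEnc (a :: l) = replicate a U ++ D :: lukEnc l := rfl

@[simp] lemma lukEnc_count_U (l : List ℕ) : (lukEnc l).count U = l.sum := by
  induction l with
  | nil => rfl
  | cons a t ih => simp [count_append, count_replicate, ih]

@[simp] lemma lukEnc_count_D (l : List ℕ) : (lukEnc l).count D = l.length := by
  induction l with
  | nil => rfl
  | cons a t ih => simp [count_append, count_replicate, ih]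

lemma lukEnc_append (l₁ l₂ : List ℕ) : lukEnc (l₁ ++ l₂) = lukEnc l₁ ++ lukEnc l₂ := by
  induction l₁ with
  | nil => rfl
  | cons a t ih => simp [ih]

@[simp] lemma lukEnc_length (l : List ℕ) : (lukEnc l).length = l.sum + l.length := by
  induction l with
  | nil => rfl
  | cons a t ih => simp [ih]; ring

lemma rep_cons_inj {a b : ℕ} {x y : List DyckStep}
    (h : replicate a U ++ D :: x = replicate b U ++ D :: y) : a = b ∧ x = y := by
  induction a generalizing b with
  | zero => cases b with
    | zero => simpa using h
    | succ b => simp [replicate_succ] at h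
  | succ a ih =>
    cases b with
    | zero => simp [replicate_succ] at h
    | succ b =>
      simp only [replicate_succ, cons_append, cons.injEq] at h
      obtain ⟨rfl, h2⟩ := ih (by simpa using h.2)
      exact ⟨rfl, h2⟩

lemma lukEnc_inj : Function.Injective lukEnc := by
  intro l₁ l₂ h
  induction l₁ generalizing l₂ with
  | nil => cases l₂ with
    | nil => rfl
    | cons b t => simp at h
  | cons a t ih =>
    cases l₂ with
    | nil => simp at h
    | cons b s =>
      simp only [lukEnc_cons] at h
      obtain ⟨rfl, h2⟩ := rep_cons_inj h
      rw [ih h2]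

lemma lukEnc_surj_aux (N : ℕ) : ∀ w : List DyckStep, w.length ≤ N →
    (∀ i, (w.drop i).count U ≤ (w.drop i).count D) → ∃ l, w = lukEnc l := by
  induction N with
  | zero =>
    intro w hlen _
    exact ⟨[], by simpa using (List.eq_nil_of_length_eq_zero (Nat.le_zero.mp hlen)).symm⟩
  | succ N ih =>
  intro w hN h
  rcases eq_or_ne (w.dropWhile (· == U)) [] with he | he
  · have hall : ∀ s ∈ w, s = U := by
      intro s hs
      have := List.dropWhile_eq_nil_iff.mp he s hs
      simpa using this
    have : w.count D = 0 := by
      rw [count_eq_zero]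
      intro hD
      exact absurd (hall _ hD) (by simp)
    have h0 := h 0
    simp only [drop_zero] at h0
    have hU : w.count U = w.length := by
      rw [count_eq_length]
      intro s hs; simp [hall s hs]
    have : w.length = 0 := by omega
    exact ⟨[], by simpa using (List.eq_nil_of_length_eq_zero this).symm⟩
  · obtain ⟨s, t, ht⟩ := List.exists_cons_of_ne_nil he
    have hsD : s = D := by
      have h2 := List.head_dropWhile_not (p := (· == U)) (l := w) he
      simp only [ht, head_cons] at h2
      exact s.dichotomy.resolve_left (by simpa using h2)
    subst hsD
    set a := (w.takeWhile (· == U)).length with ha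
    have hrep : w.takeWhile (· == U) = replicate a U := by
      rw [List.eq_replicate_iff]
      refine ⟨rfl, fun s hs => by simpa using List.mem_takeWhile_imp hs⟩
    have hw : w = replicate a U ++ D :: t := by
      conv_lhs => rw [← List.takeWhile_append_dropWhile (p := (· == U)) (l := w), hrep, ht]
    have htd : t = w.drop (a + 1) := by
      rw [hw]; simp [List.drop_append]
    have hlen : t.length < w.length := by
      rw [hw]; simp; omega
    obtain ⟨l, hl⟩ := ih t (by omega) (fun i => by
      rw [htd, List.drop_drop]; exact h _)
    exact ⟨a :: l, by rw [hw, hl, lukEnc_cons]⟩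

lemma lukEnc_surj (w : List DyckStep)
    (h : ∀ i, (w.drop i).count U ≤ (w.drop i).count D) : ∃ l, w = lukEnc l :=
  lukEnc_surj_aux w.length w le_rfl h

/-- Prefix invariant for encodings. -/
lemma lukEnc_take (l : List ℕ) (i : ℕ) :
    (l.take (((lukEnc l).take i).count D)).sum ≤ ((lukEnc l).take i).count U := by
  induction l generalizing i with
  | nil => simp [lukEnc]
  | cons a t ih =>
    rw [lukEnc_cons]
    rcases le_or_gt i a with hia | hia
    · rw [take_append_of_le_length (by simpa using hia)]
      have : (replicate a U).take i = replicate i U := by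
        rw [List.take_replicate, min_eq_left hia]
      simp [this, count_replicate]
    · rw [take_append]
      have hlr : (replicate a U).length = a := by simp
      rw [take_of_length_le (l := replicate a U) (by omega)]
      have hi : i - (replicate a U).length = (i - a - 1) + 1 := by rw [hlr]; omega
      rw [hi, take_succ_cons]
      simp only [count_append, count_replicate, count_cons, if_pos rfl, reduceCtorEq, if_false,
        if_true]
      have := ih (i - a - 1)
      set d := ((lukEnc t).take (i - a - 1)).count D with hd
      simp only [show (U == D) = false from rfl, show (D == D) = true from rfl,
        show (U == U) = true from rfl, show (D == U) = false from rfl, if_true, if_false,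
        Bool.false_eq_true]
      rw [show (0 : ℕ) + (d + 1) = d + 1 by omega, take_succ_cons]
      simp only [sum_cons]
      omega

/-- The list-level condition corresponding to Lukasiewicz paths. -/
def LukList (n : ℕ) (l : List ℕ) : Prop :=
  l.length = n ∧ l.sum = n ∧ ∀ m ≤ n, m ≤ (l.take m).sum

/-- From a valid list, build a Dyck word. -/
def lukDyck {n : ℕ} (l : List ℕ) (hl : LukList n l) : DyckWord where
  toList := lukEnc l
  count_U_eq_count_D := by rw [lukEnc_count_U, lukEnc_count_D, hl.1, hl.2.1]
  count_D_le_count_U i := by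
    have h1 := lukEnc_take l i
    have h2 : ((lukEnc l).take i).count D ≤ l.length := by
      calc ((lukEnc l).take i).count D ≤ (lukEnc l).count D :=
            (List.take_sublist i _).count_le D
        _ = l.length := lukEnc_count_D l
    have h3 := hl.2.2 (((lukEnc l).take i).count D) (by rw [← hl.1]; exact h2)
    exact h3.trans h1

lemma lukDyck_semilength {n : ℕ} (l : List ℕ) (hl : LukList n l) :
    (lukDyck l hl).semilength = n := by
  simp [DyckWord.semilength, lukDyck, hl.2.1]

lemma card_lukList_eq :
    ∀ n : ℕ, Nat.card {l : List ℕ // LukList n l} = catalan n := by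
  intro n
  rw [← DyckWord.card_dyckWord_semilength_eq_catalan n, ← Nat.card_eq_fintype_card]
  apply Nat.card_eq_of_bijective (fun x => ⟨lukDyck x.1 x.2, lukDyck_semilength x.1 x.2⟩)
  constructor
  · intro x y hxy
    apply Subtype.ext
    apply lukEnc_inj
    exact congrArg (fun p => DyckWord.toList p.1) hxy
  · rintro ⟨p, hp⟩
    have hsuf : ∀ i, ((p.toList.drop i).count U ≤ (p.toList.drop i).count D) := by
      intro i
      have h1 := p.count_U_eq_count_D
      have h2 := p.count_D_le_count_U i
      have h3 : (p.toList.take i).count U + (p.toList.drop i).count U = p.toList.count U := by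
        rw [← count_append, take_append_drop]
      have h4 : (p.toList.take i).count D + (p.toList.drop i).count D = p.toList.count D := by
        rw [← count_append, take_append_drop]
      omega
    obtain ⟨l, hl⟩ := lukEnc_surj p.toList hsuf
    have hlen : l.length = n := by
      have h := hp
      rw [DyckWord.semilength_eq_count_D, hl, lukEnc_count_D] at h
      exact h
    have hsum : l.sum = n := by
      have h : p.toList.count U = n := hp
      rw [hl, lukEnc_count_U] at h
      exact h
    have hpre : ∀ m ≤ n, m ≤ (l.take m).sum := by
      intro m hm
      have hsplit : lukEnc l = lukEnc (l.take m) ++ lukEnc (l.drop m) := by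
        rw [← lukEnc_append, take_append_drop]
      have htake : (lukEnc l).take ((lukEnc (l.take m)).length) = lukEnc (l.take m) := by
        rw [hsplit, take_left]
      have hd := p.count_D_le_count_U ((lukEnc (l.take m)).length)
      rw [hl, htake, lukEnc_count_D, lukEnc_count_U, List.length_take,
        min_eq_left (by omega)] at hd
      exact hd
    refine ⟨⟨l, hlen, hsum, hpre⟩, ?_⟩
    apply Subtype.ext
    apply DyckWord.ext
    exact hl.symm

/-- Telescoping: partial sums of the step list of a path recover the path. -/
lemma luk_sum_take {n : ℕ} (j : Fin (n + 1) → ℤ) (hj : IsLukPath n j) (m : ℕ) (hm : m ≤ n) :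
    ((((List.ofFn fun i : Fin n => (j i.succ - j i.castSucc + 1).toNat).take m).sum : ℕ) : ℤ)
      = j ⟨m, by omega⟩ + m := by
  induction m with
  | zero =>
    simpa using hj.1.symm
  | succ m ih =>
    have hm' : m < n := hm
    rw [List.sum_take_succ _ m (by simpa using hm'), Nat.cast_add, ih (by omega)]
    have hstep := hj.2.2.2 ⟨m, hm'⟩
    have hel : (List.ofFn fun i : Fin n => (j i.succ - j i.castSucc + 1).toNat)[m]'(by
        simpa using hm') = (j (⟨m, hm'⟩ : Fin n).succ - j (⟨m, hm'⟩ : Fin n).castSucc + 1).toNat := by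
      simp
    rw [hel, Int.toNat_of_nonneg (by omega)]
    have h1 : (⟨m, hm'⟩ : Fin n).succ = (⟨m + 1, by omega⟩ : Fin (n + 1)) := rfl
    have h2 : (⟨m, hm'⟩ : Fin n).castSucc = (⟨m, by omega⟩ : Fin (n + 1)) := rfl
    rw [h1, h2]
    push_cast
    ring

lemma lukList_ofFn {n : ℕ} (j : Fin (n + 1) → ℤ) (hj : IsLukPath n j) :
    LukList n (List.ofFn fun i : Fin n => (j i.succ - j i.castSucc + 1).toNat) := by
  refine ⟨by simp, ?_, ?_⟩
  · have e := luk_sum_take j hj n le_rfl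
    rw [List.take_of_length_le (by simp)] at e
    have hlast : j ⟨n, by omega⟩ = 0 := hj.2.1
    rw [hlast] at e
    omega
  · intro m hm
    have e := luk_sum_take j hj m hm
    have hnn := hj.2.2.1 ⟨m, by omega⟩
    omega

lemma card_lukPath_eq_card_lukList (n : ℕ) :
    Nat.card {j : Fin (n + 1) → ℤ // IsLukPath n j} = Nat.card {l : List ℕ // LukList n l} := by
  apply Nat.card_eq_of_bijective (fun x =>
    ⟨List.ofFn fun i : Fin n => (x.1 i.succ - x.1 i.castSucc + 1).toNat, lukList_ofFn x.1 x.2⟩)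
  constructor
  · rintro ⟨j₁, hj₁⟩ ⟨j₂, hj₂⟩ h
    simp only [Subtype.mk.injEq] at h ⊢
    funext m
    have e1 := luk_sum_take j₁ hj₁ m.1 (by omega)
    have e2 := luk_sum_take j₂ hj₂ m.1 (by omega)
    rw [h] at e1
    have : j₁ ⟨m.1, by omega⟩ = j₂ ⟨m.1, by omega⟩ := by omega
    simpa using this
  · rintro ⟨l, hlen, hsum, hpre⟩
    set j : Fin (n + 1) → ℤ := fun m => ((l.take m.1).sum : ℤ) - m.1 with hjdef
    have hj : IsLukPath n j := by
      refine ⟨by simp [hjdef], ?_, ?_, ?_⟩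
      · simp only [hjdef, Fin.val_last]
        rw [List.take_of_length_le (by omega), hsum]
        ring
      · intro m
        have := hpre m.1 (by omega)
        simp only [hjdef]
        omega
      · intro m
        simp only [hjdef, Fin.val_succ, Fin.coe_castSucc]
        rw [List.sum_take_succ _ m.1 (by omega)]
        push_cast
        have : (0 : ℤ) ≤ l[m.1]'(by omega) := by positivity
        omega
    refine ⟨⟨j, hj⟩, ?_⟩
    apply Subtype.ext
    simp only
    apply List.ext_getElem (by simp [hlen])
    intro i h1 h2
    simp only [List.getElem_ofFn]
    have hstep : j (⟨i, by simpa using h1⟩ : Fin n).succ -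
        j (⟨i, by simpa using h1⟩ : Fin n).castSucc + 1 = l[i] := by
      simp only [hjdef, Fin.val_succ, Fin.coe_castSucc]
      rw [List.sum_take_succ _ i (by omega)]
      push_cast
      ring
    rw [hstep]
    simp

end aux

/-- The number of Lukasiewicz paths with `n` steps equals the `n`-th Catalan number
`C_n = (2n)!/(n!(n+1)!)`. -/
theorem stmt0 (n : ℕ) :
    Nat.card {j : Fin (n + 1) → ℤ // IsLukPath n j} =
      (2 * n).factorial / (n.factorial * (n + 1).factorial) := by
  rw [card_lukPath_eq_card_lukList, card_lukList_eq, catalan_eq_centralBinom_div,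
    Nat.centralBinom]
  have h1 : (2 * n).factorial = (2 * n).choose n * (n.factorial * n.factorial) := by
    have := Nat.choose_mul_factorial_mul_factorial (show n ≤ 2 * n by omega)
    rw [show 2 * n - n = n by omega] at this
    rw [← this]; ring
  rw [h1, show n.factorial * (n + 1).factorial = (n + 1) * (n.factorial * n.factorial) by
    rw [Nat.factorial_succ]; ring]
  rw [Nat.mul_div_mul_right _ _ (by positivity)]
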